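/- arXiv:1909.13202 — 7 statements merged into one kernel-verified Lean document; each statement's English description precedes it below -/
import Mathlib

section
/- Equality rank(ABC) + rank(B) = rank(AB) + rank(BC) holds if and only if the induced linear map T : Rg(B)/Rg(BC) → Rg(AB)/Rg(ABC) on quotient spaces, defined by T([x]) = [Ax], is injective (equivalently, an isomorphism). -/
set_option synthInstance.maxHeartbeats 1000000
set_option maxHeartbeats 1000000


/-- Equality `rank(ABC) + rank(B) = rank(AB) + rank(BC)` holds if and only if
the induced linear map `T : Rg(B)/Rg(BC) → Rg(AB)/Rg(ABC)`, `T([x]) = [Ax]`,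
is injective. -/
theorem frobenius_rank_eq_iff_induced_map_injective {F : Type*} [Field F]
    {m n p q : ℕ}
    (A : Matrix (Fin m) (Fin n) F) (B : Matrix (Fin n) (Fin p) F)
    (C : Matrix (Fin p) (Fin q) F)
    (T : (↥(LinearMap.range B.mulVecLin) ⧸
            Submodule.comap (LinearMap.range B.mulVecLin).subtype
              (LinearMap.range (B * C).mulVecLin)) →ₗ[F]
         (↥(LinearMap.range (A * B).mulVecLin) ⧸
            Submodule.comap (LinearMap.range (A * B).mulVecLin).subtype
              (LinearMap.range (A * B * C).mulVecLin)))
    (hT : ∀ (x : ↥(LinearMap.range B.mulVecLin))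
        (hx : A.mulVec (x : Fin n → F) ∈ LinearMap.range (A * B).mulVecLin),
        T (Submodule.Quotient.mk x) =
          Submodule.Quotient.mk ⟨A.mulVec (x : Fin n → F), hx⟩) :
    (A * B * C).rank + B.rank = (A * B).rank + (B * C).rank ↔
      Function.Injective T := by
  have hle1 : LinearMap.range (B * C).mulVecLin ≤ LinearMap.range B.mulVecLin := by
    rw [Matrix.mulVecLin_mul B C]
    exact LinearMap.range_comp_le_range _ _
  have hle2 : LinearMap.range (A * B * C).mulVecLin ≤ LinearMap.range (A * B).mulVecLin := by
    rw [Matrix.mulVecLin_mul (A * B) C]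
    exact LinearMap.range_comp_le_range _ _
  -- T is surjective
  have hsurj : Function.Surjective T := by
    intro y
    obtain ⟨y', rfl⟩ := Submodule.Quotient.mk_surjective _ y
    obtain ⟨v, hv⟩ := y'.2
    have hmemB : B.mulVec v ∈ LinearMap.range B.mulVecLin := ⟨v, rfl⟩
    have hx : A.mulVec ((⟨B.mulVec v, hmemB⟩ : LinearMap.range B.mulVecLin) : Fin n → F)
        ∈ LinearMap.range (A * B).mulVecLin := ⟨v, by
      simp [Matrix.mulVecLin, ← Matrix.mulVec_mulVec]⟩
    refine ⟨Submodule.Quotient.mk ⟨B.mulVec v, hmemB⟩, ?_⟩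
    rw [hT _ hx]
    congr 1
    exact Subtype.ext (by simpa [Matrix.mulVecLin, ← Matrix.mulVec_mulVec] using hv)
  -- finrank computations
  have e1 : Module.finrank F (Submodule.comap (LinearMap.range B.mulVecLin).subtype
      (LinearMap.range (B * C).mulVecLin)) =
      Module.finrank F (LinearMap.range (B * C).mulVecLin) :=
    LinearEquiv.finrank_eq (Submodule.comapSubtypeEquivOfLe hle1)
  have e2 : Module.finrank F (Submodule.comap (LinearMap.range (A * B).mulVecLin).subtype
      (LinearMap.range (A * B * C).mulVecLin)) =
      Module.finrank F (LinearMap.range (A * B * C).mulVecLin) :=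
    LinearEquiv.finrank_eq (Submodule.comapSubtypeEquivOfLe hle2)
  have q1 := Submodule.finrank_quotient_add_finrank
    (Submodule.comap (LinearMap.range B.mulVecLin).subtype (LinearMap.range (B * C).mulVecLin))
  have q2 := Submodule.finrank_quotient_add_finrank
    (Submodule.comap (LinearMap.range (A * B).mulVecLin).subtype
      (LinearMap.range (A * B * C).mulVecLin))
  rw [e1] at q1
  rw [e2] at q2
  have key : ((A * B * C).rank + B.rank = (A * B).rank + (B * C).rank) ↔
      Module.finrank F (↥(LinearMap.range B.mulVecLin) ⧸
        Submodule.comap (LinearMap.range B.mulVecLin).subtype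
          (LinearMap.range (B * C).mulVecLin)) =
      Module.finrank F (↥(LinearMap.range (A * B).mulVecLin) ⧸
        Submodule.comap (LinearMap.range (A * B).mulVecLin).subtype
          (LinearMap.range (A * B * C).mulVecLin)) := by
    show (Module.finrank F (LinearMap.range (A * B * C).mulVecLin) +
      Module.finrank F (LinearMap.range B.mulVecLin) =
      Module.finrank F (LinearMap.range (A * B).mulVecLin) +
      Module.finrank F (LinearMap.range (B * C).mulVecLin)) ↔ _
    omega
  rw [key]
  constructor
  · intro hd
    exact ((LinearMap.injective_iff_surjective_of_finrank_eq_finrank hd).mpr hsurj)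
  · intro hinj
    exact LinearEquiv.finrank_eq (LinearEquiv.ofBijective T ⟨hinj, hsurj⟩)
end

section
/- Let n₁ = rank(B), n₂ = rank(AB), m₁ = rank(BC), m₂ = rank(ABC). Let b₁ = (u₁, …, u_{n₁}) be a basis of Rg(B) whose first m₁ vectors u₁, …, u_{m₁} form a basis of Rg(BC), and let b₂ = (w₁, …, w_{n₂}) be a basis of Rg(AB) whose first m₂ vectors w₁, …, w_{m₂} form a basis of Rg(ABC). Let L_A : Rg(B) → Rg(AB) be the linear map L_A(x) = Ax, and let M be its matrix representation with respect to b₁ and b₂. Then rank(ABC) + rank(B) = rank(AB) + rank(BC) holds if and only if the lower right block of M, consisting of the entries M_{ij} with m₂ < i ≤ n₂ and m₁ < j ≤ n₁, represents a bijective linear map (i.e., it is a square invertible matrix). -/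
set_option maxHeartbeats 1000000
set_option synthInstance.maxHeartbeats 200000


/-- Let `n₁ = rank B`, `n₂ = rank AB`, `m₁ = rank BC`, `m₂ = rank ABC`. Let `b₁`
be a basis of `Rg(B)` whose first `m₁` vectors form a basis of `Rg(BC)` and `b₂`
a basis of `Rg(AB)` whose first `m₂` vectors form a basis of `Rg(ABC)`. Let
`L_A : Rg(B) → Rg(AB)` be `x ↦ Ax` and `M` its matrix with respect to `b₁, b₂`.
Then `rank(ABC) + rank(B) = rank(AB) + rank(BC)` iff the lower-right
`(n₂ - m₂) × (n₁ - m₁)` block of `M` represents a bijective linear map. -/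
theorem frobenius_rank_eq_iff_lower_right_block_bijective {F : Type*} [Field F]
    {m n p q : ℕ}
    (A : Matrix (Fin m) (Fin n) F) (B : Matrix (Fin n) (Fin p) F)
    (C : Matrix (Fin p) (Fin q) F)
    {n₁ n₂ m₁ m₂ : ℕ}
    (hn₁ : n₁ = B.rank) (hn₂ : n₂ = (A * B).rank)
    (hm₁ : m₁ = (B * C).rank) (hm₂ : m₂ = (A * B * C).rank)
    (hle₁ : m₁ ≤ n₁) (hle₂ : m₂ ≤ n₂)
    (b₁ : Module.Basis (Fin n₁) F ↥(LinearMap.range B.mulVecLin))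
    (b₂ : Module.Basis (Fin n₂) F ↥(LinearMap.range (A * B).mulVecLin))
    (hb₁ : Submodule.span F
        (Set.range fun i : Fin m₁ => ((b₁ (Fin.castLE hle₁ i) : _) : Fin n → F))
        = LinearMap.range (B * C).mulVecLin)
    (hb₂ : Submodule.span F
        (Set.range fun i : Fin m₂ => ((b₂ (Fin.castLE hle₂ i) : _) : Fin m → F))
        = LinearMap.range (A * B * C).mulVecLin)
    (L_A : ↥(LinearMap.range B.mulVecLin) →ₗ[F]
            ↥(LinearMap.range (A * B).mulVecLin))
    (hL : ∀ x : ↥(LinearMap.range B.mulVecLin),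
        ((L_A x : _) : Fin m → F) = A.mulVec (x : Fin n → F)) :
    (A * B * C).rank + B.rank = (A * B).rank + (B * C).rank ↔
      Function.Bijective
        (((LinearMap.toMatrix b₁ b₂ L_A).submatrix
            (fun i : Fin (n₂ - m₂) => (⟨m₂ + (i : ℕ), by omega⟩ : Fin n₂))
            (fun j : Fin (n₁ - m₁) => (⟨m₁ + (j : ℕ), by omega⟩ : Fin n₁))).mulVecLin) := by
  classical
  set M := LinearMap.toMatrix b₁ b₂ L_A with hM
  -- L_A is surjective
  have hsurj : Function.Surjective L_A := by
    rintro ⟨w, hw⟩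
    obtain ⟨v, rfl⟩ := hw
    refine ⟨⟨B.mulVec v, ⟨v, rfl⟩⟩, ?_⟩
    apply Subtype.ext
    rw [hL]
    simp [Matrix.mulVecLin_apply, Matrix.mulVec_mulVec]
  -- zero lower-left block
  have hzero : ∀ (i : Fin n₂) (j : Fin n₁), (j : ℕ) < m₁ → m₂ ≤ (i : ℕ) → M i j = 0 := by
    intro i j hj hi
    have hmem : ((b₁ j : _) : Fin n → F) ∈ LinearMap.range (B * C).mulVecLin := by
      rw [← hb₁]
      apply Submodule.subset_span
      exact ⟨⟨(j : ℕ), hj⟩, by congr⟩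
    obtain ⟨u, hu⟩ := hmem
    have h2 : ((L_A (b₁ j) : _) : Fin m → F) ∈ LinearMap.range (A * B * C).mulVecLin := by
      rw [hL]
      refine ⟨u, ?_⟩
      rw [← hu]
      simp [Matrix.mulVecLin_apply, Matrix.mulVec_mulVec, Matrix.mul_assoc]
    rw [← hb₂] at h2
    -- lift membership into the submodule `range (A*B).mulVecLin`
    have h3 : L_A (b₁ j) ∈ Submodule.span F
        (Set.range fun i : Fin m₂ => b₂ (Fin.castLE hle₂ i)) := by
      have hmap : (Submodule.span F
            (Set.range fun i : Fin m₂ => b₂ (Fin.castLE hle₂ i))).map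
            (LinearMap.range (A * B).mulVecLin).subtype
          = Submodule.span F
            (Set.range fun i : Fin m₂ => ((b₂ (Fin.castLE hle₂ i) : _) : Fin m → F)) := by
        rw [Submodule.map_span]
        congr 1
        ext x
        simp [Set.range_comp]
      rw [← hmap] at h2
      obtain ⟨y, hy, hyx⟩ := h2
      rwa [Subtype.coe_injective hyx] at hy
    have h4 : L_A (b₁ j) ∈ Submodule.span F
        (⇑b₂ '' (Set.range (Fin.castLE hle₂))) := by
      have hre : (Set.range fun i : Fin m₂ => b₂ (Fin.castLE hle₂ i))
          = ⇑b₂ '' (Set.range (Fin.castLE hle₂)) := by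
        rw [← Set.range_comp]; rfl
      rwa [hre] at h3
    have h5 := (b₂.mem_span_image).1 h4
    have h6 : i ∉ (b₂.repr (L_A (b₁ j))).support := by
      intro hcon
      have := h5 hcon
      obtain ⟨k, hk⟩ := this
      have : (k : ℕ) = (i : ℕ) := congrArg Fin.val hk
      omega
    have h7 : b₂.repr (L_A (b₁ j)) i = 0 := Finsupp.notMem_support_iff.1 h6
    rw [hM, LinearMap.toMatrix_apply]
    exact h7
  -- the lower-right block is surjective
  have hDsurj : Function.Surjective
      ((M.submatrix
          (fun i : Fin (n₂ - m₂) => (⟨m₂ + (i : ℕ), by omega⟩ : Fin n₂))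
          (fun j : Fin (n₁ - m₁) => (⟨m₁ + (j : ℕ), by omega⟩ : Fin n₁))).mulVecLin) := by
    intro y
    obtain ⟨v, hv⟩ := hsurj (∑ i : Fin (n₂ - m₂), y i • b₂ ⟨m₂ + (i : ℕ), by omega⟩)
    refine ⟨fun j => b₁.repr v ⟨m₁ + (j : ℕ), by omega⟩, ?_⟩
    have hrepr : M.mulVec (b₁.repr v) = b₂.repr (L_A v) :=
      LinearMap.toMatrix_mulVec_repr b₁ b₂ L_A v
    funext i
    -- compute the RHS coordinate
    have hw : b₂.repr (L_A v) ⟨m₂ + (i : ℕ), by omega⟩ = y i := by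
      rw [hv, map_sum]
      rw [Finsupp.finset_sum_apply]
      rw [Finset.sum_eq_single i]
      · simp
      · intro k _ hk
        simp only [map_smul, Finsupp.smul_apply, Module.Basis.repr_self]
        rw [Finsupp.single_apply, if_neg, smul_zero]
        intro hcon
        apply hk
        apply Fin.ext
        have hval := congrArg Fin.val hcon
        simp only [Fin.val_mk] at hval
        omega
      · intro h
        exact absurd (Finset.mem_univ i) h
    -- compute the LHS
    have hL2 : M.mulVec (b₁.repr v) ⟨m₂ + (i : ℕ), by omega⟩
        = ∑ j : Fin (n₁ - m₁),
            M ⟨m₂ + (i : ℕ), by omega⟩ ⟨m₁ + (j : ℕ), by omega⟩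
              * b₁.repr v ⟨m₁ + (j : ℕ), by omega⟩ := by
      rw [Matrix.mulVec, dotProduct]
      rw [← Finset.sum_filter_add_sum_filter_not Finset.univ (fun j : Fin n₁ => (j : ℕ) < m₁)]
      have hz : ∑ j ∈ Finset.univ.filter (fun j : Fin n₁ => (j : ℕ) < m₁),
          M ⟨m₂ + (i : ℕ), by omega⟩ j * b₁.repr v j = 0 := by
        apply Finset.sum_eq_zero
        intro j hj
        rw [hzero _ _ (Finset.mem_filter.1 hj).2 (by simp), zero_mul]
      rw [hz, zero_add]
      refine Finset.sum_bij'
        (fun (j : Fin n₁) (hj : j ∈ Finset.univ.filter (fun j : Fin n₁ => ¬ (j : ℕ) < m₁)) =>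
          (⟨(j : ℕ) - m₁, by
            have h1 := (Finset.mem_filter.1 hj).2
            have h2 := j.isLt
            omega⟩ : Fin (n₁ - m₁)))
        (fun (j : Fin (n₁ - m₁)) _ =>
          (⟨m₁ + (j : ℕ), by have := j.isLt; omega⟩ : Fin n₁))
        ?_ ?_ ?_ ?_ ?_
      · intro a ha
        exact Finset.mem_univ _
      · intro a ha
        simp only [Finset.mem_filter, Finset.mem_univ, true_and, Fin.val_mk]
        omega
      · intro a ha
        have hma := (Finset.mem_filter.1 ha).2
        apply Fin.ext
        simp only [Fin.val_mk]
        omega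
      · intro a ha
        apply Fin.ext
        simp only [Fin.val_mk]
        omega
      · intro a ha
        have hma := (Finset.mem_filter.1 ha).2
        have h1 : (⟨m₁ + (((⟨(a : ℕ) - m₁, by
            have h2 := a.isLt
            omega⟩ : Fin (n₁ - m₁))) : ℕ), by have := a.isLt; omega⟩ : Fin n₁) = a := by
          apply Fin.ext
          simp only [Fin.val_mk]
          omega
        rw [h1]
    have := hrepr
    have hrow := congrFun this (⟨m₂ + (i : ℕ), by omega⟩ : Fin n₂)
    rw [hL2] at hrow
    rw [hw] at hrow
    simpa [Matrix.mulVecLin_apply, Matrix.mulVec, dotProduct,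
      Matrix.submatrix_apply] using hrow
  constructor
  · intro h
    refine ⟨?_, hDsurj⟩
    have hdim : n₁ - m₁ = n₂ - m₂ := by
      rw [hn₁, hn₂, hm₁, hm₂] at *
      omega
    refine (LinearMap.injective_iff_surjective_of_finrank_eq_finrank ?_).2 hDsurj
    simp [hdim]
  · intro h
    have heq := LinearEquiv.finrank_eq (LinearEquiv.ofBijective _ h)
    simp only [Module.finrank_pi, Fintype.card_fin] at heq
    omega
end

section
/- Equality rank(ABC) + rank(B) = rank(AB) + rank(BC) holds if and only if Rg(B) ∩ Ker(A) = Rg(BC) ∩ Ker(A). -/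
open Submodule LinearMap

lemma finrank_map_add_finrank_inf_ker {K V V₂ : Type*} [Field K] [AddCommGroup V]
    [Module K V] [AddCommGroup V₂] [Module K V₂] [FiniteDimensional K V]
    (f : V →ₗ[K] V₂) (p : Submodule K V) :
    Module.finrank K (p.map f) + Module.finrank K (p ⊓ LinearMap.ker f : Submodule K V)
      = Module.finrank K p := by
  have h := LinearMap.finrank_range_add_finrank_ker (f.domRestrict p)
  rw [LinearMap.range_domRestrict] at h
  rw [← h]
  congr 1
  rw [LinearMap.ker_domRestrict]
  rw [← Submodule.finrank_map_subtype_eq p, Submodule.map_comap_subtype]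

/-- Equality `rank(ABC) + rank(B) = rank(AB) + rank(BC)` holds if and only if
`Rg(B) ∩ Ker(A) = Rg(BC) ∩ Ker(A)`. -/
theorem frobenius_rank_eq_iff_inter_ker_eq {F : Type*} [Field F] {m n p q : ℕ}
    (A : Matrix (Fin m) (Fin n) F) (B : Matrix (Fin n) (Fin p) F)
    (C : Matrix (Fin p) (Fin q) F) :
    (A * B * C).rank + B.rank = (A * B).rank + (B * C).rank ↔
      LinearMap.range B.mulVecLin ⊓ LinearMap.ker A.mulVecLin =
        LinearMap.range (B * C).mulVecLin ⊓ LinearMap.ker A.mulVecLin := by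
  have hrank : ∀ (r : ℕ) (M : Matrix (Fin n) (Fin r) F),
      (A * M).rank + Module.finrank F
        (LinearMap.range M.mulVecLin ⊓ LinearMap.ker A.mulVecLin :
          Submodule F (Fin n → F)) = M.rank := by
    intro r M
    have : (A * M).rank = Module.finrank F ((LinearMap.range M.mulVecLin).map A.mulVecLin) := by
      rw [Matrix.rank, Matrix.mulVecLin_mul, LinearMap.range_comp]
    rw [this, finrank_map_add_finrank_inf_ker, Matrix.rank]
  have h1 := hrank p B
  have h2 := hrank q (B * C)
  rw [← Matrix.mul_assoc] at h2
  have hle : LinearMap.range (B * C).mulVecLin ⊓ LinearMap.ker A.mulVecLin ≤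
      LinearMap.range B.mulVecLin ⊓ LinearMap.ker A.mulVecLin := by
    refine inf_le_inf_right _ ?_
    rw [Matrix.mulVecLin_mul, LinearMap.range_comp]
    exact LinearMap.map_le_range
  constructor
  · intro h
    refine (Submodule.eq_of_le_of_finrank_le hle ?_).symm
    omega
  · intro h
    rw [h] at h1
    omega
end

section
/- Suppose D_B·V_B is a matrix whose column space equals Rg(B) ∩ Ker(A), and D_{BC}·V_{BC} is a matrix whose column space equals Rg(BC) ∩ Ker(A). Then rank(ABC) + rank(B) = rank(AB) + rank(BC) holds if and only if there exists a matrix Z such that D_B·V_B = (D_{BC}·V_{BC})·Z. -/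
open LinearMap Submodule

/-- Rank of a composition: `rank (g ∘ f) + dim (range f ⊓ ker g) = rank f`. -/
lemma finrank_range_comp_add {F V W U : Type*} [Field F]
    [AddCommGroup V] [Module F V] [AddCommGroup W] [Module F W]
    [AddCommGroup U] [Module F U] [FiniteDimensional F W]
    (f : V →ₗ[F] W) (g : W →ₗ[F] U) :
    Module.finrank F (LinearMap.range (g ∘ₗ f)) +
      Module.finrank F ↥(LinearMap.range f ⊓ LinearMap.ker g) =
      Module.finrank F (LinearMap.range f) := by
  have h := LinearMap.finrank_range_add_finrank_ker (g.domRestrict (LinearMap.range f))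
  rw [LinearMap.range_domRestrict, LinearMap.ker_domRestrict] at h
  rw [← h]
  congr 1
  · rw [LinearMap.range_comp]
  · rw [← Submodule.map_comap_subtype (LinearMap.range f) (LinearMap.ker g),
      Submodule.finrank_map_subtype_eq]

/-- If the column space of `D_B·V_B` equals `Rg(B) ∩ Ker(A)` and the column
space of `D_BC·V_BC` equals `Rg(BC) ∩ Ker(A)`, then
`rank(ABC) + rank(B) = rank(AB) + rank(BC)` holds if and only if
`D_B·V_B = (D_BC·V_BC)·Z` for some matrix `Z`. -/
theorem frobenius_rank_eq_iff_exists_factor {F : Type*} [Field F]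
    {m n p q s t : ℕ}
    (A : Matrix (Fin m) (Fin n) F) (B : Matrix (Fin n) (Fin p) F)
    (C : Matrix (Fin p) (Fin q) F)
    (DV_B : Matrix (Fin n) (Fin s) F) (DV_BC : Matrix (Fin n) (Fin t) F)
    (hB : LinearMap.range DV_B.mulVecLin =
        LinearMap.range B.mulVecLin ⊓ LinearMap.ker A.mulVecLin)
    (hBC : LinearMap.range DV_BC.mulVecLin =
        LinearMap.range (B * C).mulVecLin ⊓ LinearMap.ker A.mulVecLin) :
    (A * B * C).rank + B.rank = (A * B).rank + (B * C).rank ↔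
      ∃ Z : Matrix (Fin t) (Fin s) F, DV_B = DV_BC * Z := by
  have h1 := finrank_range_comp_add B.mulVecLin A.mulVecLin
  have h2 := finrank_range_comp_add (B * C).mulVecLin A.mulVecLin
  rw [← Matrix.mulVecLin_mul] at h1 h2
  rw [← Matrix.mul_assoc] at h2
  -- ranks as finranks
  have hle : LinearMap.range DV_BC.mulVecLin ≤ LinearMap.range DV_B.mulVecLin := by
    rw [hB, hBC]
    refine inf_le_inf_right _ ?_
    rw [Matrix.mulVecLin_mul, LinearMap.range_comp]
    exact LinearMap.map_le_range
  have key : (A * B * C).rank + B.rank = (A * B).rank + (B * C).rank ↔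
      Module.finrank F ↥(LinearMap.range DV_B.mulVecLin) =
      Module.finrank F ↥(LinearMap.range DV_BC.mulVecLin) := by
    unfold Matrix.rank
    rw [hB, hBC]
    omega
  rw [key]
  constructor
  · intro hdim
    have heq : LinearMap.range DV_BC.mulVecLin = LinearMap.range DV_B.mulVecLin :=
      Submodule.eq_of_le_of_finrank_eq hle hdim.symm
    -- each column of DV_B is in range of DV_BC
    have hcol : ∀ j : Fin s, ∃ z : Fin t → F, DV_BC.mulVec z = DV_B.mulVec (Pi.single j 1) := by
      intro j
      have : DV_B.mulVec (Pi.single j 1) ∈ LinearMap.range DV_BC.mulVecLin := by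
        rw [heq]; exact ⟨Pi.single j 1, rfl⟩
      exact this
    choose z hz using hcol
    refine ⟨Matrix.of fun i j => z j i, ?_⟩
    ext i j
    have := congrFun (hz j) i
    simp [Matrix.mulVec_single, Matrix.mul_apply, Matrix.mulVec,
      dotProduct] at this ⊢
    simp only [Pi.single_apply, mul_ite, mul_one, mul_zero,
      Finset.sum_ite_eq', Finset.mem_univ, if_true] at this
    exact this.symm

  · rintro ⟨Z, hZ⟩
    have hle2 : LinearMap.range DV_B.mulVecLin ≤ LinearMap.range DV_BC.mulVecLin := by
      rw [hZ, Matrix.mulVecLin_mul, LinearMap.range_comp]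
      exact LinearMap.map_le_range
    exact le_antisymm (Submodule.finrank_mono hle2) (Submodule.finrank_mono hle)
end

section
/- If there exist matrices X ∈ M_{q,p}(𝔽) and Y ∈ M_{n,m}(𝔽) such that B = BCX + YAB, then rank(ABC) + rank(B) = rank(AB) + rank(BC). -/
open Module LinearMap

/-- Rank-nullity for a linear map restricted to a submodule. -/
lemma aux_finrank_map_add_inf_ker {F V W : Type*} [Field F] [AddCommGroup V] [Module F V]
    [AddCommGroup W] [Module F W] [FiniteDimensional F V]
    (f : V →ₗ[F] W) (U : Submodule F V) :
    Module.finrank F (U.map f) + Module.finrank F (LinearMap.ker f ⊓ U : Submodule F V)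
      = Module.finrank F U := by
  have h1 := LinearMap.finrank_range_add_finrank_ker (f.domRestrict U)
  rw [LinearMap.range_domRestrict, LinearMap.ker_domRestrict] at h1
  have h2 : Module.finrank F (Submodule.comap U.subtype (LinearMap.ker f))
      = Module.finrank F (LinearMap.ker f ⊓ U : Submodule F V) := by
    rw [← Submodule.finrank_map_subtype_eq U, Submodule.map_comap_subtype, inf_comm]
  rw [h2] at h1
  exact h1

/-- If `B = BCX + YAB` for some matrices `X` and `Y`, then
`rank(ABC) + rank(B) = rank(AB) + rank(BC)`. -/
theorem frobenius_rank_eq_of_solvable {F : Type*} [Field F] {m n p q : ℕ}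
    (A : Matrix (Fin m) (Fin n) F) (B : Matrix (Fin n) (Fin p) F)
    (C : Matrix (Fin p) (Fin q) F)
    (h : ∃ (X : Matrix (Fin q) (Fin p) F) (Y : Matrix (Fin n) (Fin m) F),
        B = B * C * X + Y * (A * B)) :
    (A * B * C).rank + B.rank = (A * B).rank + (B * C).rank := by
  obtain ⟨X, Y, hXY⟩ := h
  set fA := A.mulVecLin
  set U := LinearMap.range B.mulVecLin
  set V := LinearMap.range (B * C).mulVecLin
  have hrAB : (A * B).rank = Module.finrank F (U.map fA) := by
    rw [Matrix.rank, Matrix.mulVecLin_mul, LinearMap.range_comp]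
  have hrABC : (A * B * C).rank = Module.finrank F (V.map fA) := by
    rw [Matrix.mul_assoc, Matrix.rank, Matrix.mulVecLin_mul, LinearMap.range_comp]
  have hVU : V ≤ U := by
    rintro v ⟨x, rfl⟩
    exact ⟨C.mulVec x, by simp [Matrix.mulVecLin_mul]⟩
  have hker : LinearMap.ker fA ⊓ U = LinearMap.ker fA ⊓ V := by
    apply le_antisymm
    · rintro u ⟨hu, x, rfl⟩
      refine ⟨hu, X.mulVec x, ?_⟩
      have hAu : A.mulVec (B.mulVec x) = 0 := hu
      calc (B * C).mulVecLin (X.mulVec x)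
          = (B * C * X).mulVec x + Y.mulVec (A.mulVec (B.mulVec x)) := by
            simp [hAu, Matrix.mulVecLin, Matrix.mulVec_mulVec, Matrix.mul_assoc]
        _ = (B * C * X).mulVec x + (Y * (A * B)).mulVec x := by
            simp only [Matrix.mulVec_mulVec]
        _ = B.mulVecLin x := by
            rw [← Matrix.add_mulVec, ← hXY]; rfl
    · exact inf_le_inf_left _ hVU
  have e1 := aux_finrank_map_add_inf_ker fA U
  have e2 := aux_finrank_map_add_inf_ker fA V
  rw [hker] at e1
  have hrB : B.rank = Module.finrank F U := rfl
  have hrBC : (B * C).rank = Module.finrank F V := rfl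
  rw [hrAB, hrABC, hrB, hrBC]
  omega
end

section
/- If rank(ABC) + rank(B) = rank(AB) + rank(BC), then there exist matrices X ∈ M_{q,p}(𝔽) and Y ∈ M_{n,m}(𝔽) such that B = BCX + YAB. -/
/-- If `rank(ABC) + rank(B) = rank(AB) + rank(BC)`, then there exist matrices
`X` and `Y` with `B = BCX + YAB`. -/
theorem solvable_of_frobenius_rank_eq {F : Type*} [Field F] {m n p q : ℕ}
    (A : Matrix (Fin m) (Fin n) F) (B : Matrix (Fin n) (Fin p) F)
    (C : Matrix (Fin p) (Fin q) F)
    (h : (A * B * C).rank + B.rank = (A * B).rank + (B * C).rank) :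
    ∃ (X : Matrix (Fin q) (Fin p) F) (Y : Matrix (Fin n) (Fin m) F),
      B = B * C * X + Y * (A * B) := by
  classical
  set a := A.mulVecLin with ha
  set b := B.mulVecLin with hb
  let U : Submodule F (Fin n → F) := LinearMap.range b
  let V : Submodule F (Fin n → F) := LinearMap.range (B * C).mulVecLin
  have hVU : V ≤ U := by
    rw [show V = LinearMap.range (B * C).mulVecLin from rfl, Matrix.mulVecLin_mul]
    exact LinearMap.range_comp_le_range _ _
  -- dimension count: finrank W = finrank (map a W) + finrank (ker a ⊓ W)
  have dimcount : ∀ (W : Submodule F (Fin n → F)),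
      Module.finrank F W =
        Module.finrank F (Submodule.map a W) +
          Module.finrank F ↥(LinearMap.ker a ⊓ W) := by
    intro W
    have h1 := LinearMap.finrank_range_add_finrank_ker (a.domRestrict W)
    have h2 : LinearMap.ker (a.domRestrict W) =
        Submodule.comap W.subtype (LinearMap.ker a ⊓ W) := by
      rw [Submodule.comap_inf, LinearMap.ker_domRestrict, Submodule.comap_subtype_self,
        inf_top_eq]
    have h3 : Module.finrank F (LinearMap.ker (a.domRestrict W)) =
        Module.finrank F ↥(LinearMap.ker a ⊓ W) := by
      rw [h2]
      exact (Submodule.comapSubtypeEquivOfLe inf_le_right).finrank_eq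
    rw [LinearMap.range_domRestrict, h3] at h1
    omega
  -- express ranks
  have hU : Module.finrank F U = B.rank := rfl
  have hV : Module.finrank F V = (B * C).rank := rfl
  have hmapU : Submodule.map a U = LinearMap.range (A * B).mulVecLin := by
    rw [Matrix.mulVecLin_mul, LinearMap.range_comp]
  have hmapV : Submodule.map a V = LinearMap.range (A * B * C).mulVecLin := by
    rw [Matrix.mul_assoc, Matrix.mulVecLin_mul, LinearMap.range_comp]
  have dU := dimcount U
  have dV := dimcount V
  rw [hmapU] at dU
  rw [hmapV] at dV
  have hrk1 : Module.finrank F (LinearMap.range (A * B).mulVecLin) = (A * B).rank := rfl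
  have hrk2 : Module.finrank F (LinearMap.range (A * B * C).mulVecLin) = (A * B * C).rank := rfl
  rw [hrk1] at dU
  rw [hrk2] at dV
  -- key: ker a ⊓ U ≤ V
  have hKle : LinearMap.ker a ⊓ V ≤ LinearMap.ker a ⊓ U := inf_le_inf_left _ hVU
  have hdimK : Module.finrank F ↥(LinearMap.ker a ⊓ U) ≤
      Module.finrank F ↥(LinearMap.ker a ⊓ V) := by
    rw [hU] at dU; rw [hV] at dV
    omega
  have hKeq : LinearMap.ker a ⊓ V = LinearMap.ker a ⊓ U :=
    Submodule.eq_of_le_of_finrank_le hKle hdimK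
  have hkey : LinearMap.ker a ⊓ U ≤ V := by
    rw [← hKeq]; exact inf_le_right
  -- construct y
  obtain ⟨P, hP⟩ := Submodule.exists_isCompl (LinearMap.range (A * B).mulVecLin)
  let proj := (LinearMap.range (A * B).mulVecLin).linearProjOfIsCompl P hP
  have hmem : ∀ u : U, a u ∈ LinearMap.range (A * B).mulVecLin := by
    intro u
    rw [← hmapU]
    exact Submodule.mem_map_of_mem u.2
  let φ : U →ₗ[F] LinearMap.range (A * B).mulVecLin :=
    LinearMap.codRestrict _ (a.domRestrict U) (fun u => hmem u)
  have hφsurj : LinearMap.range φ = ⊤ := by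
    rw [LinearMap.range_eq_top]
    rintro ⟨w, hw⟩
    rw [← hmapU] at hw
    obtain ⟨u, hu, huw⟩ := hw
    exact ⟨⟨u, hu⟩, Subtype.ext huw⟩
  obtain ⟨s, hs⟩ := φ.exists_rightInverse_of_surjective hφsurj
  let y : (Fin m → F) →ₗ[F] (Fin n → F) := U.subtype ∘ₗ s ∘ₗ proj
  -- y inverts a on range(ab), landing in U
  have hy : ∀ v : Fin p → F, a (y (a (b v))) = a (b v) := by
    intro v
    have habv : a (b v) ∈ LinearMap.range (A * B).mulVecLin := by
      rw [Matrix.mulVecLin_mul]; exact ⟨v, rfl⟩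
    have hproj : proj (a (b v)) = ⟨a (b v), habv⟩ :=
      Submodule.linearProjOfIsCompl_apply_left hP ⟨a (b v), habv⟩
    have hsapp := congrArg Subtype.val (LinearMap.congr_fun hs ⟨a (b v), habv⟩)
    simp only [LinearMap.comp_apply, LinearMap.id_apply] at hsapp
    have : (φ (s ⟨a (b v), habv⟩) : Fin m → F) = a (b v) := hsapp
    show a (U.subtype (s (proj (a (b v))))) = a (b v)
    rw [hproj]
    exact this
  let g : (Fin p → F) →ₗ[F] (Fin n → F) := b - y ∘ₗ (a ∘ₗ b)
  have hg : ∀ v, g v ∈ V := by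
    intro v
    apply hkey
    constructor
    · show a (g v) = 0
      have : g v = b v - y (a (b v)) := rfl
      rw [this, map_sub, hy v, sub_self]
    · show g v ∈ U
      have : g v = b v - y (a (b v)) := rfl
      rw [this]
      exact sub_mem (LinearMap.mem_range_self b v) (s (proj (a (b v)))).2
  -- construct x : lift g through bc
  let bc := (B * C).mulVecLin
  have hbcsurj : LinearMap.range bc.rangeRestrict = ⊤ :=
    LinearMap.range_eq_top.mpr (LinearMap.surjective_rangeRestrict bc)
  obtain ⟨t, ht⟩ := bc.rangeRestrict.exists_rightInverse_of_surjective hbcsurj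
  let x : (Fin p → F) →ₗ[F] (Fin q → F) := t ∘ₗ (LinearMap.codRestrict V g hg)
  have hbcx : ∀ v, bc (x v) = g v := by
    intro v
    have := congrArg Subtype.val (LinearMap.congr_fun ht (LinearMap.codRestrict V g hg v))
    exact this
  refine ⟨LinearMap.toMatrix' x, LinearMap.toMatrix' y, ?_⟩
  have hx' : (LinearMap.toMatrix' x).mulVecLin = x := Matrix.toLin'_toMatrix' x
  have hy' : (LinearMap.toMatrix' y).mulVecLin = y := Matrix.toLin'_toMatrix' y
  apply Matrix.toLin'.injective
  refine LinearMap.ext fun v => ?_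
  rw [Matrix.toLin'_apply', Matrix.toLin'_apply', Matrix.mulVecLin_add, LinearMap.add_apply,
    Matrix.mulVecLin_mul (B * C), Matrix.mulVecLin_mul (LinearMap.toMatrix' y),
    LinearMap.comp_apply, LinearMap.comp_apply, hx', hy']
  show b v = bc (x v) + y ((A * B).mulVecLin v)
  rw [hbcx]
  have hab : (A * B).mulVecLin v = a (b v) := by rw [Matrix.mulVecLin_mul]; rfl
  rw [hab]
  show b v = (b v - y (a (b v))) + y (a (b v))
  abel
end

section
/- Equality rank(ABC) + rank(B) = rank(AB) + rank(BC) holds if and only if there exist matrices X ∈ M_{q,p}(𝔽) and Y ∈ M_{n,m}(𝔽) such that B = BCX + YAB. -/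
set_option maxHeartbeats 1000000 in
set_option synthInstance.maxHeartbeats 400000 in
private lemma dim_map_lemma {F : Type*} [Field F] {n m : ℕ}
    (f : (Fin n → F) →ₗ[F] (Fin m → F)) (S : Submodule F (Fin n → F)) :
    Module.finrank F (S.map f) + Module.finrank F (S ⊓ LinearMap.ker f : Submodule F (Fin n → F)) =
      Module.finrank F S := by
  have h := LinearMap.finrank_range_add_finrank_ker (f.domRestrict S)
  rw [LinearMap.range_domRestrict] at h
  have hker : LinearMap.ker (f.domRestrict S) =
      Submodule.comap S.subtype (S ⊓ LinearMap.ker f) := by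
    rw [LinearMap.ker_domRestrict, Submodule.comap_inf, Submodule.comap_subtype_self, top_inf_eq]
  rw [hker] at h
  have heq : Module.finrank F (Submodule.comap S.subtype (S ⊓ LinearMap.ker f)) =
      Module.finrank F (S ⊓ LinearMap.ker f : Submodule F (Fin n → F)) :=
    LinearEquiv.finrank_eq (Submodule.comapSubtypeEquivOfLe inf_le_left)
  omega

/-- `rank(ABC) + rank(B) = rank(AB) + rank(BC)` holds if and only if there
exist matrices `X` and `Y` with `B = BCX + YAB`. -/
theorem frobenius_rank_eq_iff_solvable {F : Type*} [Field F] {m n p q : ℕ}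
    (A : Matrix (Fin m) (Fin n) F) (B : Matrix (Fin n) (Fin p) F)
    (C : Matrix (Fin p) (Fin q) F) :
    (A * B * C).rank + B.rank = (A * B).rank + (B * C).rank ↔
      ∃ (X : Matrix (Fin q) (Fin p) F) (Y : Matrix (Fin n) (Fin m) F),
        B = B * C * X + Y * (A * B) := by
  set a := A.mulVecLin with ha
  set b := B.mulVecLin with hb
  set c := C.mulVecLin with hc
  set V : Submodule F (Fin n → F) := LinearMap.range b with hV
  set W : Submodule F (Fin n → F) := (LinearMap.range c).map b with hW
  set K : Submodule F (Fin n → F) := LinearMap.ker a with hK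
  have hWV : W ≤ V := by
    intro v hv
    obtain ⟨u, -, rfl⟩ := Submodule.mem_map.mp hv
    exact LinearMap.mem_range_self b u
  -- rank identities
  have hrB : B.rank = Module.finrank F V := rfl
  have hrBC : (B * C).rank = Module.finrank F W := by
    rw [Matrix.rank, Matrix.mulVecLin_mul, LinearMap.range_comp]
  have hrAB : (A * B).rank = Module.finrank F (V.map a) := by
    rw [Matrix.rank, Matrix.mulVecLin_mul, LinearMap.range_comp]
  have hrABC : (A * B * C).rank = Module.finrank F ((W.map a)) := by
    rw [Matrix.rank, Matrix.mulVecLin_mul, Matrix.mulVecLin_mul, LinearMap.comp_assoc,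
      LinearMap.range_comp, LinearMap.range_comp]
  have hdV : Module.finrank F (V.map a) + Module.finrank F (V ⊓ K : Submodule F (Fin n → F)) =
      Module.finrank F V := dim_map_lemma a V
  have hdW : Module.finrank F (W.map a) + Module.finrank F (W ⊓ K : Submodule F (Fin n → F)) =
      Module.finrank F W := dim_map_lemma a W
  have hWK_le : W ⊓ K ≤ V ⊓ K := inf_le_inf_right K hWV
  constructor
  · -- equality → solvability
    intro hEq
    rw [hrB, hrBC, hrAB, hrABC] at hEq
    have hfr : Module.finrank F (W ⊓ K : Submodule F (Fin n → F)) =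
        Module.finrank F (V ⊓ K : Submodule F (Fin n → F)) := by omega
    have hPK : W ⊓ K = V ⊓ K := Submodule.eq_of_le_of_finrank_eq hWK_le hfr
    set P : Submodule F (Fin n → F) := V ⊓ K with hP
    have hPV : P ≤ V := inf_le_left
    -- complement U of P inside V
    obtain ⟨Q', hQ'⟩ := (P.comap V.subtype).exists_isCompl
    set U : Submodule F (Fin n → F) := Q'.map V.subtype with hU
    have hUV : U ≤ V := Submodule.map_subtype_le V Q'
    have hPU_sup : P ⊔ U = V := by
      have h1 : Submodule.map V.subtype (Submodule.comap V.subtype P ⊔ Q') =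
          Submodule.map V.subtype ⊤ := by rw [hQ'.sup_eq_top]
      rw [Submodule.map_sup, Submodule.map_comap_subtype, Submodule.map_top,
        Submodule.range_subtype, inf_of_le_right hPV] at h1
      exact h1
    have hPU_inf : P ⊓ U = ⊥ := by
      have h2 : Submodule.map V.subtype (Submodule.comap V.subtype P ⊓ Q') =
          Submodule.map V.subtype ⊥ := by rw [hQ'.inf_eq_bot]
      rw [Submodule.map_inf _ (Submodule.injective_subtype V), Submodule.map_comap_subtype,
        Submodule.map_bot, inf_of_le_right hPV] at h2
      exact h2
    have hUK : U ⊓ K = ⊥ := by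
      have h3 : U ⊓ K = U ⊓ P := by
        rw [hP, ← inf_assoc, inf_of_le_left hUV]
      rw [h3, inf_comm, hPU_inf]
    -- f : U → F^m injective
    set f : U →ₗ[F] (Fin m → F) := a.domRestrict U with hf
    have hfinj : Function.Injective f := by
      rw [← LinearMap.ker_eq_bot, hf, LinearMap.ker_domRestrict, Submodule.eq_bot_iff]
      rintro ⟨x, hxU⟩ hx
      have hx' : x ∈ U ⊓ K := ⟨hxU, hx⟩
      rw [hUK] at hx'
      exact Subtype.ext hx'
    set e := LinearEquiv.ofInjective f hfinj with he
    obtain ⟨U'', hU''⟩ := (LinearMap.range f).exists_isCompl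
    set proj := Submodule.linearProjOfIsCompl _ _ hU'' with hproj
    set y : (Fin m → F) →ₗ[F] (Fin n → F) :=
      U.subtype ∘ₗ (e.symm : LinearMap.range f →ₗ[F] U) ∘ₗ proj with hy
    have hyau : ∀ u : U, y (a u) = u := by
      intro u
      have h1 : a (u : Fin n → F) = f u := rfl
      have h2 : proj (f u) = ⟨f u, LinearMap.mem_range_self f u⟩ :=
        Submodule.linearProjOfIsCompl_apply_left hU'' ⟨f u, LinearMap.mem_range_self f u⟩
      have h3 : e.symm ⟨f u, LinearMap.mem_range_self f u⟩ = u := by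
        have h4 : e u = ⟨f u, LinearMap.mem_range_self f u⟩ := rfl
        rw [← h4, LinearEquiv.symm_apply_apply]
      simp only [hy, LinearMap.coe_comp, Function.comp_apply, h1, h2]
      exact congrArg Subtype.val h3
    have hkey : ∀ v ∈ V, v - y (a v) ∈ P := by
      intro v hv
      rw [← hPU_sup] at hv
      obtain ⟨pv, hpv, uv, huv, rfl⟩ := Submodule.mem_sup.mp hv
      have hap : a pv = 0 := hpv.2
      have h5 : a (pv + uv) = a uv := by rw [map_add, hap, zero_add]
      rw [h5]
      have h6 : y (a uv) = uv := hyau ⟨uv, huv⟩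
      rw [h6]
      simpa using hpv
    -- range (b - y∘a∘b) ≤ range (b∘c)
    set g : (Fin p → F) →ₗ[F] (Fin n → F) := b - y ∘ₗ (a ∘ₗ b) with hg
    have hrange : ∀ w, g w ∈ LinearMap.range (b ∘ₗ c) := by
      intro w
      have h1 : g w = b w - y (a (b w)) := rfl
      have h2 : g w ∈ P := h1 ▸ hkey (b w) (LinearMap.mem_range_self b w)
      rw [← hPK] at h2
      have h7 : g w ∈ W := h2.1
      rwa [hW, ← LinearMap.range_comp] at h7
    obtain ⟨x, hx⟩ := Module.projective_lifting_property (LinearMap.rangeRestrict (b ∘ₗ c))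
      (g.codRestrict (LinearMap.range (b ∘ₗ c)) hrange) (LinearMap.surjective_rangeRestrict _)
    have hbcx : (b ∘ₗ c) ∘ₗ x = g := by
      have h8 := congrArg (fun h => (LinearMap.range (b ∘ₗ c)).subtype ∘ₗ h) hx
      simpa [← LinearMap.comp_assoc, LinearMap.subtype_comp_codRestrict] using h8
    refine ⟨LinearMap.toMatrix' x, LinearMap.toMatrix' y, ?_⟩
    have hmx : (LinearMap.toMatrix' x).mulVecLin = x := by
      rw [← Matrix.toLin'_apply', Matrix.toLin'_toMatrix']
    have hmy : (LinearMap.toMatrix' y).mulVecLin = y := by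
      rw [← Matrix.toLin'_apply', Matrix.toLin'_toMatrix']
    have hML : B.mulVecLin =
        (B * C * LinearMap.toMatrix' x + LinearMap.toMatrix' y * (A * B)).mulVecLin := by
      simp only [Matrix.mulVecLin_add, Matrix.mulVecLin_mul, hmx, hmy]
      rw [← ha, ← hb, ← hc, hbcx, hg]
      abel
    have h9 := congrArg LinearMap.toMatrix' hML
    rwa [← Matrix.toLin'_apply', ← Matrix.toLin'_apply', LinearMap.toMatrix'_toLin',
      LinearMap.toMatrix'_toLin'] at h9
  · -- solvability → equality
    rintro ⟨X, Y, hXY⟩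
    have hsub : V ⊓ K ≤ W ⊓ K := by
      rintro v ⟨⟨u, rfl⟩, hvK⟩
      refine ⟨?_, hvK⟩
      have hv : b u = (b ∘ₗ c) (X.mulVecLin u) + Y.mulVecLin (a (b u)) := by
        conv_lhs => rw [hb, hXY]
        simp [Matrix.mulVecLin_add, Matrix.mulVecLin_mul, ha, hb, hc]
      have hzero : a (b u) = 0 := hvK
      rw [hzero, map_zero, add_zero] at hv
      rw [hW, ← LinearMap.range_comp]
      exact hv ▸ LinearMap.mem_range_self _ _
    have hPK : V ⊓ K = W ⊓ K := le_antisymm hsub hWK_le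
    rw [hrB, hrBC, hrAB, hrABC]
    rw [hPK] at hdV
    omega
end
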